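/- The Clifford–Hermite polynomial is given in closed form by CH_{2t}(H_k) = 2^{2t} t! L_t^{m/2+k−1}(|x|²) H_k, where L_t^α(x) = Σ_{i=0}^t [Γ(t+α+1)/(i!(t−i)!Γ(i+α+1))](−x)^i is the generalized Laguerre polynomial. -/

import Mathlib

open MvPolynomial

/-- The Laplacian `Δ = ∑ ∂_{x_i}²` on polynomials in `m` variables. -/
noncomputable def lap (m : ℕ) : Module.End ℝ (MvPolynomial (Fin m) ℝ) :=
  ∑ i : Fin m, ((pderiv i).toLinearMap * (pderiv i).toLinearMap)

/-- The Euler operator `𝔼 = ∑ x_i ∂_{x_i}`. -/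
noncomputable def euler (m : ℕ) : Module.End ℝ (MvPolynomial (Fin m) ℝ) :=
  ∑ i : Fin m, (LinearMap.mulLeft ℝ (X i) * (pderiv i).toLinearMap)

/-- Multiplication by `|x|² = ∑ x_i²`. -/
noncomputable def nsqOp (m : ℕ) : Module.End ℝ (MvPolynomial (Fin m) ℝ) :=
  LinearMap.mulLeft ℝ (∑ i : Fin m, X i ^ 2)


/-- The scalar operator `D_+² = −Δ − 4|x|² + 4𝔼 + 2m`. -/
noncomputable def Dplus2 (m : ℕ) : Module.End ℝ (MvPolynomial (Fin m) ℝ) :=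
  -lap m - (4 : ℝ) • nsqOp m + (4 : ℝ) • euler m + ((2 * m : ℕ) : ℝ) • 1

/-- The coefficient of `(-x)^i` in the generalized Laguerre polynomial
`L_t^α(x) = ∑_{i=0}^t Γ(t+α+1)/(i!(t−i)!Γ(i+α+1)) (−x)^i`. -/
noncomputable def laguerreCoeff (t : ℕ) (α : ℝ) (i : ℕ) : ℝ :=
  Real.Gamma (t + α + 1) / ((i.factorial : ℝ) * ((t - i).factorial : ℝ) * Real.Gamma (i + α + 1))

/-! ### Auxiliary scalar coefficients -/

noncomputable def cCH (α : ℝ) (t i : ℕ) : ℝ :=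
  4^t * (-1)^i * (t.choose i) * (Real.Gamma ((t:ℝ) + α + 1) / Real.Gamma ((i:ℝ) + α + 1))

lemma cCH_zero {α : ℝ} {t i : ℕ} (h : t < i) : cCH α t i = 0 := by
  simp [cCH, Nat.choose_eq_zero_of_lt h]

lemma Gpos {α : ℝ} (hα : 0 < α + 1) (j : ℕ) : 0 < Real.Gamma ((j:ℝ) + α + 1) := by
  apply Real.Gamma_pos_of_pos
  have : (0:ℝ) ≤ j := Nat.cast_nonneg j
  linarith

lemma Grec {α : ℝ} (hα : 0 < α + 1) (j : ℕ) :
    Real.Gamma (((j+1:ℕ):ℝ) + α + 1) = ((j:ℝ) + α + 1) * Real.Gamma ((j:ℝ) + α + 1) := by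
  have h : ((j:ℝ) + α + 1) ≠ 0 := by
    have : (0:ℝ) ≤ j := Nat.cast_nonneg j
    linarith
  have := Real.Gamma_add_one h
  push_cast
  rw [show (j:ℝ) + 1 + α + 1 = ((j:ℝ) + α + 1) + 1 by ring, this]

lemma choose_rel (t j : ℕ) :
    ((j:ℝ) + 1) * (t.choose (j+1)) = ((t:ℝ) - j) * (t.choose j) := by
  have h1 : (t+1) * t.choose j = (t.choose j + t.choose (j+1)) * (j+1) := by
    rw [← Nat.choose_succ_succ, ← Nat.add_one_mul_choose_eq]
  have := congrArg (Nat.cast (R := ℝ)) h1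
  push_cast at this
  ring_nf
  ring_nf at this
  linarith

lemma key0 {α : ℝ} (hα : 0 < α + 1) (t : ℕ) :
    cCH α (t+1) 0 = (4*(α+1)) * cCH α t 0 - (4*1*(1+α)) * cCH α t 1 := by
  unfold cCH
  rw [Grec hα t]
  rw [show ((1:ℕ):ℝ) + α + 1 = ((0:ℕ):ℝ) + α + 1 + 1 by push_cast; ring]
  rw [Real.Gamma_add_one (show ((0:ℕ):ℝ) + α + 1 ≠ 0 by push_cast; linarith)]
  have g0 := Gpos hα 0
  have gt := Gpos hα t
  simp only [Nat.choose_zero_right, Nat.choose_one_right, Nat.cast_one, Nat.cast_zero]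
  field_simp
  have h0 : (0:ℝ) + α + 1 ≠ 0 := by linarith
  field_simp
  ring

lemma keyRec {α : ℝ} (hα : 0 < α + 1) (t i : ℕ) :
    cCH α (t+1) (i+1)
      = (8*((i:ℝ)+1) + 4*(α+1)) * cCH α t (i+1) - 4 * cCH α t i
        - (4*((i:ℝ)+2)*(((i:ℝ)+2)+α)) * cCH α t (i+2) := by
  unfold cCH
  rw [Grec hα t, Grec hα (i+1), Grec hα i]
  have h1 := choose_rel t i
  have h2 := choose_rel t (i+1)
  rw [show i+1+1 = i+2 from rfl] at h2
  rw [Nat.choose_succ_succ t i]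
  have hg := (Gpos hα i).ne'
  have hgt := Gpos hα t
  have d1 : (i:ℝ) + α + 1 ≠ 0 := by have : (0:ℝ) ≤ i := Nat.cast_nonneg i; linarith
  have d2 : (i:ℝ) + 1 + α + 1 ≠ 0 := by have : (0:ℝ) ≤ i := Nat.cast_nonneg i; linarith
  push_cast at h1 h2 ⊢
  simp only [pow_succ, Nat.succ_eq_add_one]
  set x0 : ℝ := ((t.choose i : ℕ) : ℝ) with hx0
  set x1 : ℝ := ((t.choose (i+1) : ℕ) : ℝ) with hx1
  set x2 : ℝ := ((t.choose (i+2) : ℕ) : ℝ) with hx2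
  set G : ℝ := Real.Gamma ((i:ℝ) + α + 1) with hG
  set GT : ℝ := Real.Gamma ((t:ℝ) + α + 1) with hGT
  set q : ℝ := ((4:ℝ)) ^ t with hq
  set u : ℝ := ((-1:ℝ)) ^ i with hu
  set I : ℝ := ((i:ℕ):ℝ) with hI
  set T : ℝ := ((t:ℕ):ℝ) with hT
  field_simp
  linear_combination (4*q*u*(I+α+2)) * h1 + (4*q*u*(I+α+2)) * h2

lemma cCH_base {α : ℝ} (hα : 0 < α + 1) : cCH α 0 0 = 1 := by
  unfold cCH
  rw [div_self (Gpos hα 0).ne']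
  norm_num

lemma bridge {α : ℝ} (hα : 0 < α + 1) {t i : ℕ} (h : i ≤ t) :
    (2:ℝ)^(2*t) * (t.factorial : ℝ) * (laguerreCoeff t α i * (-1)^i) = cCH α t i := by
  unfold laguerreCoeff cCH
  have hfac := Nat.choose_mul_factorial_mul_factorial h
  have hfi : ((i.factorial : ℕ) : ℝ) ≠ 0 := by positivity
  have hfti : (((t-i).factorial : ℕ) : ℝ) ≠ 0 := by positivity
  have hgi := (Gpos hα i).ne'
  have hfac' : ((t.choose i : ℕ) : ℝ) * (i.factorial : ℝ) * ((t-i).factorial : ℝ)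
      = (t.factorial : ℝ) := by exact_mod_cast congrArg (Nat.cast (R := ℝ)) hfac
  rw [show (2:ℝ)^(2*t) = 4^t by rw [pow_mul]; norm_num]
  field_simp
  linear_combination (-(Real.Gamma ((t:ℝ)+α+1))) * hfac'

/-! ### Operator lemmas -/

lemma lap_apply' {m : ℕ} (P : MvPolynomial (Fin m) ℝ) :
    lap m P = ∑ i : Fin m, pderiv i (pderiv i P) := by
  simp [lap, LinearMap.sum_apply, Module.End.mul_apply]

lemma euler_apply' {m : ℕ} (P : MvPolynomial (Fin m) ℝ) :
    euler m P = ∑ i : Fin m, X i * pderiv i P := by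
  simp [euler, LinearMap.sum_apply, Module.End.mul_apply]

lemma X_mul_pderiv_monomial {m : ℕ} (i : Fin m) (s : Fin m →₀ ℕ) (a : ℝ) :
    (X i : MvPolynomial (Fin m) ℝ) * pderiv i (monomial s a) = (s i : ℝ) • monomial s a := by
  rw [pderiv_monomial]
  rcases Nat.eq_zero_or_pos (s i) with h | h
  · simp [h]
  · rw [X, monomial_mul, one_mul, smul_monomial]
    have hs : (fun₀ | i => 1) + (s - fun₀ | i => 1) = s := by
      ext j
      rcases eq_or_ne j i with rfl | hj
      · simp [Finsupp.single_apply]; omega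
      · simp [Finsupp.single_apply, Ne.symm hj]
    rw [hs]
    congr 1
    simp [smul_eq_mul, mul_comm]

lemma euler_homog {m k : ℕ} (P : MvPolynomial (Fin m) ℝ) (hP : P.IsHomogeneous k) :
    euler m P = (k : ℝ) • P := by
  conv_lhs => rw [← P.support_sum_monomial_coeff]
  rw [map_sum]
  conv_rhs => rw [← P.support_sum_monomial_coeff, Finset.smul_sum]
  refine Finset.sum_congr rfl fun s hs => ?_
  rw [euler_apply']
  rw [Finset.sum_congr rfl fun i _ => X_mul_pderiv_monomial i s (coeff s P)]
  rw [← Finset.sum_smul]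
  congr 1
  have hd : s.degree = k := by
    by_contra hne
    exact mem_support_iff.mp hs (hP.coeff_eq_zero hne)
  have : ∑ i : Fin m, s i = s.degree := by
    rw [Finsupp.degree]
    exact (Finset.sum_subset (Finset.subset_univ _)
      fun i _ h => Finsupp.notMem_support_iff.mp h).symm
  rw [← hd, ← this]
  push_cast
  rfl

lemma pderiv_r2 {m : ℕ} (i : Fin m) :
    pderiv i (∑ j : Fin m, X j ^ 2) = 2 * (X i : MvPolynomial (Fin m) ℝ) := by
  rw [map_sum, Finset.sum_eq_single i]
  · simp [pderiv_pow]
  · intro j _ hj; simp [pderiv_X_of_ne hj, pderiv_pow]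
  · simp

lemma lap_r2_mul {m : ℕ} (P : MvPolynomial (Fin m) ℝ) :
    lap m ((∑ j : Fin m, X j ^ 2) * P)
      = (2 * (m : ℝ)) • P + (4 : ℝ) • euler m P + (∑ j : Fin m, X j ^ 2) * lap m P := by
  have h2 : ∀ i : Fin m, pderiv i (2 : MvPolynomial (Fin m) ℝ) = 0 := by
    intro i
    rw [show (2 : MvPolynomial (Fin m) ℝ) = C 2 from (map_ofNat C 2).symm, pderiv_C]
  have key : ∀ i : Fin m, pderiv i (pderiv i ((∑ j : Fin m, X j ^ 2) * P))
      = 2 * P + 4 * (X i * pderiv i P) + (∑ j : Fin m, X j ^ 2) * pderiv i (pderiv i P) := by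
    intro i
    simp only [pderiv_mul, pderiv_r2, pderiv_X_self, map_add, h2]
    ring
  rw [lap_apply', Finset.sum_congr rfl fun i _ => key i]
  rw [Finset.sum_add_distrib, Finset.sum_add_distrib, Finset.sum_const,
    ← Finset.mul_sum, ← Finset.mul_sum, ← euler_apply', ← lap_apply']
  rw [Finset.card_univ, Fintype.card_fin, nsmul_eq_mul, smul_eq_C_mul, smul_eq_C_mul]
  rw [show ((m : MvPolynomial (Fin m) ℝ)) = C (m:ℝ) by rw [C_eq_coe_nat]]
  rw [show ((2 * (m:ℝ))) = (m:ℝ)*2 by ring, map_mul, map_ofNat, map_ofNat]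
  ring


lemma homogS {m k : ℕ} (H : MvPolynomial (Fin m) ℝ) (hH : H.IsHomogeneous k) (i : ℕ) :
    ((∑ j : Fin m, X j ^ 2) ^ i * H).IsHomogeneous (2 * i + k) := by
  refine IsHomogeneous.mul ?_ hH
  have : ((∑ j : Fin m, X j ^ 2) : MvPolynomial (Fin m) ℝ).IsHomogeneous 2 := by
    apply IsHomogeneous.sum
    intro j _
    simpa using (isHomogeneous_X ℝ j).pow 2
  simpa [mul_comm] using this.pow i

lemma lap_S {m k : ℕ} (H : MvPolynomial (Fin m) ℝ) (hH : H.IsHomogeneous k)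
    (hharm : lap m H = 0) (i : ℕ) :
    lap m ((∑ j : Fin m, X j ^ 2) ^ (i+1) * H)
      = (4 * ((i:ℝ)+1) * (((i:ℝ)+1) + ((m:ℝ)/2 + (k:ℝ) - 1))) • ((∑ j : Fin m, X j ^ 2) ^ i * H) := by
  induction i with
  | zero =>
    rw [pow_one, lap_r2_mul, hharm, euler_homog H hH, mul_zero, add_zero, smul_smul,
      ← add_smul, pow_zero, one_mul]
    congr 1
    push_cast; ring
  | succ n ih =>
    rw [pow_succ', mul_assoc, lap_r2_mul, ih, euler_homog _ (homogS H hH (n+1)),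
      mul_smul_comm, ← mul_assoc, ← pow_succ']
    rw [smul_smul, ← add_smul, ← add_smul]
    congr 1
    push_cast; ring

lemma Dplus2_apply' {m : ℕ} (P : MvPolynomial (Fin m) ℝ) :
    Dplus2 m P = -(lap m P) - (4:ℝ) • ((∑ j : Fin m, X j ^ 2) * P)
      + (4:ℝ) • euler m P + ((2 * m : ℕ) : ℝ) • P := by
  simp [Dplus2, nsqOp, LinearMap.sub_apply, LinearMap.add_apply, LinearMap.neg_apply,
    LinearMap.smul_apply, LinearMap.mulLeft_apply]

lemma Dplus2_S {m k : ℕ} (H : MvPolynomial (Fin m) ℝ) (hH : H.IsHomogeneous k)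
    (hharm : lap m H = 0) (i : ℕ) :
    Dplus2 m ((∑ j : Fin m, X j ^ 2) ^ i * H)
      = (8*(i:ℝ) + 4*((m:ℝ)/2 + (k:ℝ) - 1) + 4) • ((∑ j : Fin m, X j ^ 2) ^ i * H)
        - (4:ℝ) • ((∑ j : Fin m, X j ^ 2) ^ (i+1) * H)
        - (4*(i:ℝ)*((i:ℝ) + ((m:ℝ)/2 + (k:ℝ) - 1))) • ((∑ j : Fin m, X j ^ 2) ^ (i-1) * H) := by
  rw [Dplus2_apply', euler_homog _ (homogS H hH i), ← mul_assoc, ← pow_succ']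
  cases i with
  | zero =>
    rw [pow_zero, one_mul, hharm]
    push_cast
    module
  | succ n =>
    rw [lap_S H hH hharm n]
    simp only [Nat.add_sub_cancel]
    push_cast
    module

theorem cliffordHermite_laguerre (m k t : ℕ) (hm : 1 ≤ m) (H : MvPolynomial (Fin m) ℝ)
    (hH : H.IsHomogeneous k) (hharm : lap m H = 0) :
    (Dplus2 m ^ t) H =
      ((2 : ℝ) ^ (2 * t) * (t.factorial : ℝ)) •
        ∑ i ∈ Finset.range (t + 1),
          (laguerreCoeff t ((m : ℝ) / 2 + k - 1) i * (-1) ^ i) •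
            ((∑ j : Fin m, X j ^ 2) ^ i * H) := by
  have hm' : (1:ℝ) ≤ (m:ℝ) := by exact_mod_cast hm
  have hk' : (0:ℝ) ≤ (k:ℝ) := Nat.cast_nonneg k
  have hα : 0 < ((m:ℝ)/2 + (k:ℝ) - 1) + 1 := by linarith
  have key : ∀ t : ℕ, (Dplus2 m ^ t) H
      = ∑ i ∈ Finset.range (t+1), cCH ((m:ℝ)/2 + (k:ℝ) - 1) t i • ((∑ j : Fin m, X j ^ 2) ^ i * H) := by
    intro t
    induction t with
    | zero =>
      rw [pow_zero]
      simp [cCH_base hα]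
    | succ t ih =>
      rw [pow_succ', Module.End.mul_apply, ih, map_sum]
      simp only [map_smul, Dplus2_S H hH hharm]
      simp only [smul_sub, smul_smul]
      rw [Finset.sum_sub_distrib, Finset.sum_sub_distrib]
      set α : ℝ := (m:ℝ)/2 + (k:ℝ) - 1 with hαd
      have hA : ∑ i ∈ Finset.range (t+1), (cCH α t i * (8*(i:ℝ) + 4*α + 4)) • ((∑ j : Fin m, X j ^ 2) ^ i * H)
          = ∑ i ∈ Finset.range (t+2), (cCH α t i * (8*(i:ℝ) + 4*α + 4)) • ((∑ j : Fin m, X j ^ 2) ^ i * H) := by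
        rw [Finset.sum_range_succ (n := t+1), cCH_zero (Nat.lt_succ_self t)]
        simp
      have hB : ∑ i ∈ Finset.range (t+1), (cCH α t i * 4) • ((∑ j : Fin m, X j ^ 2) ^ (i+1) * H)
          = ∑ i ∈ Finset.range (t+2),
              ((if i = 0 then 0 else cCH α t (i-1) * 4)) • ((∑ j : Fin m, X j ^ 2) ^ i * H) := by
        rw [Finset.sum_range_succ' _ (t+1)]
        simp
      have hC : ∑ i ∈ Finset.range (t+1),
            (cCH α t i * (4*(i:ℝ)*((i:ℝ) + α))) • ((∑ j : Fin m, X j ^ 2) ^ (i-1) * H)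
          = ∑ i ∈ Finset.range (t+2),
              (cCH α t (i+1) * (4*((i:ℝ)+1)*(((i:ℝ)+1) + α))) • ((∑ j : Fin m, X j ^ 2) ^ i * H) := by
        rw [Finset.sum_range_succ' _ t]
        rw [Finset.sum_range_succ (n := t+1), Finset.sum_range_succ (n := t),
          cCH_zero (Nat.lt_succ_self t), cCH_zero (by omega : t < t+2)]
        simp
      rw [hA, hB, hC, ← Finset.sum_sub_distrib, ← Finset.sum_sub_distrib]
      refine Finset.sum_congr rfl fun i hi => ?_
      rw [← sub_smul, ← sub_smul]
      congr 1
      cases i with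
      | zero =>
        norm_num
        have h0 := key0 hα t
        linear_combination -h0
      | succ j =>
        simp only [Nat.succ_ne_zero, if_neg, Nat.add_sub_cancel]
        have hr := keyRec hα t j
        push_cast at hr ⊢
        linear_combination -hr
  rw [key t, Finset.smul_sum]
  refine Finset.sum_congr rfl fun i hi => ?_
  rw [smul_smul]
  congr 1
  have hb := bridge hα (i := i) (t := t) (Nat.lt_succ_iff.mp (Finset.mem_range.mp hi))
  linear_combination -hb
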